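/- arXiv:1601.03122 — 3 statements merged into one kernel-verified Lean document; each statement's English description precedes it below -/
import Mathlib

section
/- Let η ∈ ℝ, let k_1, …, k_n ∈ ℂ satisfy Im k_j > η for all j, and define B(k) = ∏_{j=1}^n (k − k_j)/(k − conj(k_j) − 2iη) and, for k with |k − iη| large, log B(k) = ∑_{j=1}^n Log((k − k_j)/(k − conj(k_j) − 2iη)), where Log is the principal branch of the logarithm (each factor tends to 1 as |k| → ∞, so this is well defined for |k − iη| sufficiently large). Then there exist constants C > 0 and R₀ > max_j |k_j − iη| such that for all R ≥ R₀, | ∫₀^π log B(iη + Re^{iθ}) · iRe^{iθ} dθ + 2π ∑_{j=1}^n (η − Im k_j) | ≤ C/R. In other words, the integral of log B over the counterclockwise semicircle {k : |k − iη| = R, Im k > η} equals −2π ∑_j (η − Im k_j) + O(R^{-1}) as R → ∞. -/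
open Complex

/-- The branch of `log B` given by summing principal logarithms of the Blaschke factors:
`log B(k) = ∑_j Log((k - k_j)/(k - conj(k_j) - 2iη))`. -/
noncomputable def logBlaschke (η : ℝ) (n : ℕ) (k : Fin n → ℂ) (z : ℂ) : ℂ :=
  ∑ j, Complex.log ((z - k j) / (z - (starRingEnd ℂ) (k j) - 2 * Complex.I * (η : ℂ)))

lemma log_ratio_bound (M : ℝ) (hM : 1 ≤ M) {u v w : ℂ} (hu : ‖u‖ ≤ M) (hv : ‖v‖ ≤ M)
    (hw : 5 * M ≤ ‖w‖) :
    ‖Complex.log ((w - u) / (w - v)) - (v - u) / w‖ ≤ 15 * M ^ 2 / ‖w‖ ^ 2 := by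
  have hw5 : (5 : ℝ) ≤ ‖w‖ := le_trans (by nlinarith) hw
  have hw0 : w ≠ 0 := by
    intro h; rw [h, norm_zero] at hw5; linarith
  have hwvnorm : (4/5) * ‖w‖ ≤ ‖w - v‖ := by
    have := norm_sub_norm_le w v
    have hM5 : M ≤ ‖w‖ / 5 := by linarith
    linarith [le_trans hv hM5]
  have hwvpos : (0:ℝ) < ‖w - v‖ := lt_of_lt_of_le (by positivity) hwvnorm
  have hwv0 : w - v ≠ 0 := by
    intro h; rw [h, norm_zero] at hwvpos; linarith
  set ζ : ℂ := (v - u) / (w - v) with hζdef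
  have hvu : ‖v - u‖ ≤ 2 * M := le_trans (norm_sub_le _ _) (by linarith)
  have hζnorm : ‖ζ‖ ≤ (5/2) * M / ‖w‖ := by
    rw [hζdef, norm_div, div_le_div_iff₀ hwvpos (by positivity)]
    nlinarith [norm_nonneg (v - u), norm_nonneg w]
  have hζhalf : ‖ζ‖ ≤ 1/2 := by
    have : (5/2) * M / ‖w‖ ≤ 1/2 := by
      rw [div_le_div_iff₀ (by positivity) (by norm_num : (0:ℝ) < 2)]
      linarith
    linarith
  have hratio : (w - u) / (w - v) = 1 + ζ := by
    rw [hζdef]; field_simp; ring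
  have hlog : ‖Complex.log ((w - u) / (w - v)) - ζ‖ ≤ ‖ζ‖ ^ 2 := by
    rw [hratio]
    refine le_trans (Complex.norm_log_one_add_sub_self_le (by linarith)) ?_
    have h1 : (1 - ‖ζ‖)⁻¹ ≤ 2 := by
      rw [inv_le_comm₀ (by linarith) (by norm_num)]; linarith
    have h2 : (0:ℝ) ≤ ‖ζ‖ ^ 2 := by positivity
    nlinarith
  have hdiff : ‖ζ - (v - u) / w‖ ≤ (5/2) * M ^ 2 / ‖w‖ ^ 2 := by
    have heq : ζ - (v - u) / w = (v - u) * v / ((w - v) * w) := by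
      rw [hζdef]; field_simp; ring
    rw [heq, norm_div, norm_mul, norm_mul]
    have hwpos : (0:ℝ) < ‖w‖ := by linarith
    rw [div_le_div_iff₀ (by positivity) (by positivity)]
    have h1 : ‖v - u‖ * ‖v‖ ≤ 2 * M * M :=
      mul_le_mul hvu hv (norm_nonneg _) (by linarith)
    calc ‖v - u‖ * ‖v‖ * ‖w‖ ^ 2 ≤ 2 * M * M * ‖w‖ ^ 2 := by
          exact mul_le_mul_of_nonneg_right h1 (by positivity)
      _ = (5/2) * M ^ 2 * ((4/5) * ‖w‖ * ‖w‖) := by ring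
      _ ≤ (5/2) * M ^ 2 * (‖w - v‖ * ‖w‖) := by
          apply mul_le_mul_of_nonneg_left _ (by positivity)
          exact mul_le_mul_of_nonneg_right hwvnorm (by linarith)
  have hζsq : ‖ζ‖ ^ 2 ≤ (25/4) * M ^ 2 / ‖w‖ ^ 2 := by
    have hwpos : (0:ℝ) < ‖w‖ := by linarith
    calc ‖ζ‖ ^ 2 ≤ ((5/2) * M / ‖w‖) ^ 2 :=
          pow_le_pow_left₀ (norm_nonneg _) hζnorm 2
      _ = (25/4) * M ^ 2 / ‖w‖ ^ 2 := by rw [div_pow]; ring_nf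
  calc ‖Complex.log ((w - u) / (w - v)) - (v - u) / w‖
      ≤ ‖Complex.log ((w - u) / (w - v)) - ζ‖ + ‖ζ - (v - u) / w‖ :=
        norm_sub_le_norm_sub_add_norm_sub _ _ _
    _ ≤ ‖ζ‖ ^ 2 + (5/2) * M ^ 2 / ‖w‖ ^ 2 := add_le_add hlog hdiff
    _ ≤ (25/4) * M ^ 2 / ‖w‖ ^ 2 + (5/2) * M ^ 2 / ‖w‖ ^ 2 := by linarith
    _ ≤ 15 * M ^ 2 / ‖w‖ ^ 2 := by
        have hwpos : (0:ℝ) < ‖w‖ := by linarith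
        rw [← add_div, div_le_div_iff₀ (by positivity) (by positivity)]
        nlinarith

lemma ratio_re_pos (M : ℝ) (hM : 1 ≤ M) {u v w : ℂ} (hu : ‖u‖ ≤ M) (hv : ‖v‖ ≤ M)
    (hw : 5 * M ≤ ‖w‖) : 0 < ((w - u) / (w - v)).re := by
  have hw5 : (5 : ℝ) ≤ ‖w‖ := le_trans (by nlinarith) hw
  have hwvnorm : (4/5) * ‖w‖ ≤ ‖w - v‖ := by
    have := norm_sub_norm_le w v
    have hM5 : M ≤ ‖w‖ / 5 := by linarith
    linarith [le_trans hv hM5]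
  have hwvpos : (0:ℝ) < ‖w - v‖ := lt_of_lt_of_le (by positivity) hwvnorm
  have hwv0 : w - v ≠ 0 := by
    intro h; rw [h, norm_zero] at hwvpos; linarith
  set ζ : ℂ := (v - u) / (w - v) with hζdef
  have hvu : ‖v - u‖ ≤ 2 * M := le_trans (norm_sub_le _ _) (by linarith)
  have hζhalf : ‖ζ‖ ≤ 1/2 := by
    rw [hζdef, norm_div, div_le_div_iff₀ hwvpos (by norm_num : (0:ℝ) < 2)]
    nlinarith
  have hratio : (w - u) / (w - v) = 1 + ζ := by
    rw [hζdef]; field_simp; ring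
  rw [hratio]
  have := abs_le.mp (le_trans (Complex.abs_re_le_norm ζ) hζhalf)
  simp only [Complex.add_re, Complex.one_re]
  linarith [this.1]

/-- The integral of `log B` over the counterclockwise semicircle
`{k : |k - iη| = R, Im k > η}` equals `-2π ∑_j (η - Im k_j) + O(R⁻¹)` as `R → ∞`. -/
theorem integral_logBlaschke_semicircle (η : ℝ) (n : ℕ) (k : Fin n → ℂ)
    (hk : ∀ j, η < (k j).im) :
    ∃ C > (0 : ℝ), ∃ R₀ : ℝ, 0 < R₀ ∧ (∀ j, ‖k j - Complex.I * (η : ℂ)‖ < R₀) ∧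
      ∀ R : ℝ, R₀ ≤ R →
        ‖
            (∫ θ in (0 : ℝ)..Real.pi,
                logBlaschke η n k (Complex.I * (η : ℂ) + (R : ℂ) * Complex.exp (Complex.I * (θ : ℂ))) *
                  (Complex.I * (R : ℂ) * Complex.exp (Complex.I * (θ : ℂ)))) +
              2 * (Real.pi : ℂ) * ∑ j, ((η : ℂ) - (((k j).im : ℝ) : ℂ))‖ ≤ C / R := by
  set u : Fin n → ℂ := fun j => k j - Complex.I * (η : ℂ) with hudef
  set v : Fin n → ℂ := fun j => (starRingEnd ℂ) (k j) + Complex.I * (η : ℂ) with hvdef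
  set M : ℝ := 1 + ∑ j, ‖u j‖ with hMdef
  have hM : 1 ≤ M := by
    have : (0:ℝ) ≤ ∑ j, ‖u j‖ := Finset.sum_nonneg fun j _ => norm_nonneg _
    simp only [hMdef]; linarith
  have hMpos : 0 < M := by linarith
  have huM : ∀ j, ‖u j‖ ≤ M - 1 := by
    intro j
    have : ‖u j‖ ≤ ∑ i, ‖u i‖ :=
      Finset.single_le_sum (f := fun i => ‖u i‖) (fun i _ => norm_nonneg _) (Finset.mem_univ j)
    simp only [hMdef]; linarith
  have hvM : ∀ j, ‖v j‖ ≤ M - 1 := by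
    intro j
    have hconj : v j = (starRingEnd ℂ) (u j) := by
      simp only [hudef, hvdef, map_sub, map_mul, Complex.conj_I, Complex.conj_ofReal]
      ring
    rw [hconj, RCLike.norm_conj]
    exact huM j
  refine ⟨15 * Real.pi * n * M ^ 2 + 1, by positivity, 5 * M, by positivity, ?_, ?_⟩
  · intro j
    calc ‖k j - Complex.I * (η:ℂ)‖ = ‖u j‖ := rfl
      _ ≤ M - 1 := huM j
      _ < 5 * M := by linarith
  intro R hR
  have hRpos : 0 < R := lt_of_lt_of_le (by positivity) hR
  set w : ℝ → ℂ := fun θ => (R : ℂ) * Complex.exp (Complex.I * (θ : ℂ)) with hwdef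
  have hwnorm : ∀ θ : ℝ, ‖w θ‖ = R := by
    intro θ
    simp only [hwdef, norm_mul, Complex.norm_exp, Complex.norm_real]
    simp [Complex.mul_re, abs_of_pos hRpos]
  have hwR : ∀ θ : ℝ, 5 * M ≤ ‖w θ‖ := fun θ => by rw [hwnorm θ]; exact hR
  have hw0 : ∀ θ : ℝ, w θ ≠ 0 := by
    intro θ h
    have := hwnorm θ
    rw [h, norm_zero] at this
    linarith
  set F : ℝ → ℂ := fun θ => ∑ j, Complex.log ((w θ - u j) / (w θ - v j)) * (Complex.I * w θ)
    with hFdef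
  set c : ℂ := ∑ j, Complex.I * (v j - u j) with hcdef
  have huM' : ∀ j, ‖u j‖ ≤ M := fun j => le_trans (huM j) (by linarith)
  have hvM' : ∀ j, ‖v j‖ ≤ M := fun j => le_trans (hvM j) (by linarith)
  -- rewrite integrand
  have hInt : (∫ θ in (0:ℝ)..Real.pi,
      logBlaschke η n k (Complex.I * (η : ℂ) + (R : ℂ) * Complex.exp (Complex.I * (θ : ℂ))) *
        (Complex.I * (R : ℂ) * Complex.exp (Complex.I * (θ : ℂ))))
      = ∫ θ in (0:ℝ)..Real.pi, F θ := by
    apply intervalIntegral.integral_congr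
    intro θ _
    simp only [hFdef, logBlaschke, Finset.sum_mul]
    apply Finset.sum_congr rfl
    intro j _
    have hnum : Complex.I * (η : ℂ) + (R : ℂ) * Complex.exp (Complex.I * (θ : ℂ)) - k j
        = w θ - u j := by simp only [hwdef, hudef]; ring
    have hden : Complex.I * (η : ℂ) + (R : ℂ) * Complex.exp (Complex.I * (θ : ℂ))
        - (starRingEnd ℂ) (k j) - 2 * Complex.I * (η : ℂ) = w θ - v j := by
      simp only [hwdef, hvdef]; ring
    rw [hnum, hden]
    simp only [hwdef]; ring
  -- continuity of F
  have hwcont : Continuous w := by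
    apply continuous_const.mul
    exact Complex.continuous_exp.comp (continuous_const.mul Complex.continuous_ofReal)
  have hFcont : Continuous F := by
    apply continuous_finset_sum
    intro j _
    apply Continuous.mul _ (continuous_const.mul hwcont)
    rw [continuous_iff_continuousAt]
    intro θ
    have hr : ContinuousAt (fun θ : ℝ => (w θ - u j) / (w θ - v j)) θ := by
      apply ContinuousAt.div
      · exact (hwcont.sub continuous_const).continuousAt
      · exact (hwcont.sub continuous_const).continuousAt
      · intro h
        have h2 : ‖w θ - v j‖ = 0 := by rw [h, norm_zero]
        have hwvnorm : (4/5) * ‖w θ‖ ≤ ‖w θ - v j‖ := by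
          have := norm_sub_norm_le (w θ) (v j)
          have hM5 : M ≤ ‖w θ‖ / 5 := by linarith [hwR θ]
          linarith [le_trans (hvM' j) hM5]
        have := hwR θ
        rw [h2] at hwvnorm
        nlinarith
    exact hr.clog (Complex.mem_slitPlane_iff.mpr
      (Or.inl (ratio_re_pos M hM (huM' j) (hvM' j) (hwR θ))))
  have hFint : IntervalIntegrable F MeasureTheory.volume 0 Real.pi :=
    hFcont.intervalIntegrable _ _
  -- pointwise bound
  have hbound : ∀ θ : ℝ, ‖F θ - c‖ ≤ 15 * n * M ^ 2 / R := by
    intro θ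
    have hc : c = ∑ j, ((v j - u j) / w θ) * (Complex.I * w θ) := by
      rw [hcdef]
      apply Finset.sum_congr rfl
      intro j _
      have hX : ∀ (a W : ℂ), W ≠ 0 → a / W * (Complex.I * W) = Complex.I * a := by
        intro a W hW; field_simp
      exact (hX _ _ (hw0 θ)).symm
    rw [hc, ← Finset.sum_sub_distrib]
    refine le_trans (norm_sum_le _ _) ?_
    have hterm : ∀ j : Fin n, ‖Complex.log ((w θ - u j) / (w θ - v j)) * (Complex.I * w θ)
        - (v j - u j) / w θ * (Complex.I * w θ)‖ ≤ 15 * M ^ 2 / R := by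
      intro j
      rw [← sub_mul, norm_mul, norm_mul, Complex.norm_I, one_mul, hwnorm θ]
      have h1 := log_ratio_bound M hM (huM' j) (hvM' j) (hwR θ)
      rw [hwnorm θ] at h1
      calc ‖Complex.log ((w θ - u j) / (w θ - v j)) - (v j - u j) / w θ‖ * R
          ≤ 15 * M ^ 2 / R ^ 2 * R := mul_le_mul_of_nonneg_right h1 (le_of_lt hRpos)
        _ = 15 * M ^ 2 / R := by field_simp
    calc ∑ j, ‖Complex.log ((w θ - u j) / (w θ - v j)) * (Complex.I * w θ)
          - (v j - u j) / w θ * (Complex.I * w θ)‖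
        ≤ ∑ _j : Fin n, 15 * M ^ 2 / R := Finset.sum_le_sum fun j _ => hterm j
      _ = n * (15 * M ^ 2 / R) := by simp [Finset.sum_const, nsmul_eq_mul]
      _ = 15 * n * M ^ 2 / R := by ring
  -- the constant integral identity
  have hcval : (Real.pi : ℂ) * c + 2 * (Real.pi : ℂ) * ∑ j, ((η : ℂ) - (((k j).im : ℝ) : ℂ)) = 0 := by
    rw [hcdef, Finset.mul_sum, Finset.mul_sum, ← Finset.sum_add_distrib]
    apply Finset.sum_eq_zero
    intro j _
    have hvu : v j - u j = 2 * Complex.I * ((η : ℂ) - (((k j).im : ℝ) : ℂ)) := by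
      simp only [hudef, hvdef]
      have h2 : (starRingEnd ℂ) (k j) = k j - 2 * ((k j).im : ℂ) * Complex.I := by
        have h := Complex.sub_conj (k j)
        push_cast at h
        linear_combination -h
      rw [h2]; ring
    rw [hvu]
    have : Complex.I * (2 * Complex.I * ((η : ℂ) - (((k j).im : ℝ) : ℂ)))
        = -2 * ((η : ℂ) - (((k j).im : ℝ) : ℂ)) := by
      rw [show Complex.I * (2 * Complex.I * ((η : ℂ) - (((k j).im : ℝ) : ℂ)))
        = 2 * (Complex.I * Complex.I) * ((η : ℂ) - (((k j).im : ℝ) : ℂ)) by ring,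
        Complex.I_mul_I]; ring
    rw [this]; ring
  -- put it together
  rw [hInt]
  have hsplit : (∫ θ in (0:ℝ)..Real.pi, F θ)
      + 2 * (Real.pi : ℂ) * ∑ j, ((η : ℂ) - (((k j).im : ℝ) : ℂ))
      = ∫ θ in (0:ℝ)..Real.pi, (F θ - c) := by
    rw [intervalIntegral.integral_sub hFint (intervalIntegrable_const)]
    rw [intervalIntegral.integral_const]
    rw [sub_zero, Complex.real_smul]
    have := hcval
    ring_nf
    ring_nf at this
    linear_combination this
  rw [hsplit]
  calc ‖∫ θ in (0:ℝ)..Real.pi, (F θ - c)‖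
      ≤ 15 * n * M ^ 2 / R * |Real.pi - 0| :=
        intervalIntegral.norm_integral_le_of_norm_le_const fun θ _ => hbound θ
    _ = 15 * Real.pi * n * M ^ 2 / R := by
        rw [sub_zero, _root_.abs_of_nonneg Real.pi_pos.le]; ring
    _ ≤ (15 * Real.pi * n * M ^ 2 + 1) / R := by
        gcongr
        linarith
end

section
/- Let n ∈ ℕ with n ≥ 1 and let p be a real number with n − 1 ≤ p ≤ n and p > 0. Then there exists a constant Γ ≥ 0 such that for every z ∈ ℂ, |(1 + z) exp(∑_{m=1}^{n−1} ((−1)^m / m) z^m)| ≤ exp(Γ |z|^p). -/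
/-- The scalar inequality underlying the bound `ln|det_n(1+K)| ≤ Γ_{n,p} ‖K‖_p^p` for
`n`-th order regularized determinants: for `n - 1 ≤ p ≤ n`, `p > 0`, there is `Γ ≥ 0`
with `|(1+z) exp(∑_{m=1}^{n-1} ((-1)^m/m) z^m)| ≤ exp(Γ |z|^p)` for all `z ∈ ℂ`. -/
theorem regularized_det_scalar_bound (n : ℕ) (hn : 1 ≤ n) (p : ℝ)
    (hp1 : (n : ℝ) - 1 ≤ p) (hp2 : p ≤ n) (hp0 : 0 < p) :
    ∃ Γ : ℝ, 0 ≤ Γ ∧ ∀ z : ℂ,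
      ‖(1 + z) *
          Complex.exp (∑ m ∈ Finset.Icc 1 (n - 1), ((-1 : ℂ) ^ m / m) * z ^ m)‖ ≤
        Real.exp (Γ * ‖z‖ ^ p) := by
  obtain ⟨k, rfl⟩ : ∃ k, n = k + 1 := ⟨n - 1, (Nat.succ_pred_eq_of_pos hn).symm⟩
  simp only [Nat.add_sub_cancel] at *
  have h2k : (1:ℝ) ≤ 2 ^ (k+1) := one_le_pow₀ (by norm_num)
  have hpinv : 0 < 1 / p := by positivity
  set Γ : ℝ := ((k:ℝ) + 1 + 1/p) * 2 ^ (k+1) + 2 with hΓdef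
  have hΓ2 : 2 ≤ Γ := by
    have h0 : (0:ℝ) ≤ ((k:ℝ) + 1 + 1/p) * 2 ^ (k+1) := by positivity
    rw [hΓdef]; linarith
  refine ⟨Γ, by linarith, fun z => ?_⟩
  rcases eq_or_ne z 0 with rfl | hz0
  · have h0 : (∑ m ∈ Finset.Icc 1 k, ((-1:ℂ)^m/m) * (0:ℂ)^m) = 0 :=
      Finset.sum_eq_zero fun m hm => by
        rw [zero_pow (by have := (Finset.mem_Icc.mp hm).1; omega), mul_zero]
    rw [h0]
    simp [Real.zero_rpow hp0.ne']
  set t := ‖z‖ with ht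
  have ht0 : 0 < t := norm_pos_iff.mpr hz0
  -- rewrite the sum as -logTaylor
  have hsub : Finset.Icc 1 k ⊆ Finset.range (k+1) := fun x hx => by
    simp only [Finset.mem_Icc] at hx
    simp only [Finset.mem_range]
    omega
  have hzero : ∀ x ∈ Finset.range (k+1), x ∉ Finset.Icc 1 k →
      -((-1:ℂ)^(x+1) * z^x / x) = 0 := by
    intro x hx hnx
    have hx0 : x = 0 := by
      simp only [Finset.mem_range] at hx
      simp only [Finset.mem_Icc, not_and, not_le] at hnx
      omega
    subst hx0; simp
  have hsum : (∑ m ∈ Finset.Icc 1 k, ((-1:ℂ)^m/m) * z^m) = -(Complex.logTaylor (k+1) z) := by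
    calc ∑ m ∈ Finset.Icc 1 k, ((-1:ℂ)^m/m) * z^m
        = ∑ m ∈ Finset.Icc 1 k, -((-1:ℂ)^(m+1) * z^m / m) :=
          Finset.sum_congr rfl fun j _ => by ring
      _ = ∑ m ∈ Finset.range (k+1), -((-1:ℂ)^(m+1) * z^m / m) :=
          Finset.sum_subset hsub hzero
      _ = -(Complex.logTaylor (k+1) z) := by
          rw [Complex.logTaylor, ← Finset.sum_neg_distrib]
  have hexpre : ∀ w : ℂ, ‖Complex.exp w‖ ≤ Real.exp ‖w‖ := fun w => by
    rw [Complex.norm_exp]; exact Real.exp_le_exp.mpr (Complex.re_le_norm w)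
  have hcast : ((k:ℝ) + 1) = ((k+1 : ℕ) : ℝ) := by push_cast; ring
  rcases le_or_gt t (1/2) with hsmall | hbig
  · -- small case
    have h1z : (1:ℂ) + z ≠ 0 := by
      intro h
      have hz : z = -1 := by linear_combination h
      have ht1 : t = 1 := by rw [ht, hz]; simp
      linarith
    have key : (1+z) * Complex.exp (∑ m ∈ Finset.Icc 1 k, ((-1:ℂ)^m/m) * z^m)
        = Complex.exp (Complex.log (1+z) - Complex.logTaylor (k+1) z) := by
      rw [hsum, sub_eq_add_neg, Complex.exp_add, Complex.exp_log h1z]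
    rw [key]
    refine (hexpre _).trans (Real.exp_le_exp.mpr ?_)
    have hlt : ‖z‖ < 1 := by rw [← ht]; linarith
    have hb := Complex.norm_log_sub_logTaylor_le k hlt
    rw [← ht] at hb
    have hbb : t ^ (k+1) * (1 - t)⁻¹ / (k+1) ≤ 2 * t ^ (k+1) := by
      have h1 : (1 - t)⁻¹ ≤ 2 := by
        rw [inv_le_comm₀ (by linarith) (by norm_num)]; linarith
      have h2 : (1:ℝ) ≤ (k:ℝ)+1 := by have := (Nat.cast_nonneg k : (0:ℝ) ≤ k); linarith
      have h3 : 0 ≤ t ^ (k+1) := pow_nonneg ht0.le _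
      have h4 : t ^ (k+1) * (1-t)⁻¹ ≤ t ^ (k+1) * 2 := mul_le_mul_of_nonneg_left h1 h3
      calc t ^ (k+1) * (1 - t)⁻¹ / ((k:ℝ)+1)
          ≤ t ^ (k+1) * 2 / 1 := div_le_div₀ (mul_nonneg h3 (by norm_num)) h4 one_pos h2
        _ = 2 * t ^ (k+1) := by ring
    have hpow : t ^ (k+1) ≤ t ^ p := by
      rw [← Real.rpow_natCast t (k+1)]
      exact Real.rpow_le_rpow_of_exponent_ge ht0 (by linarith) (by exact_mod_cast hp2)
    have htp : 0 ≤ t ^ p := Real.rpow_nonneg ht0.le p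
    calc ‖Complex.log (1+z) - Complex.logTaylor (k+1) z‖
        ≤ t ^ (k+1) * (1 - t)⁻¹ / (k+1) := by exact_mod_cast hb
      _ ≤ 2 * t ^ (k+1) := hbb
      _ ≤ 2 * t ^ p := by linarith
      _ ≤ Γ * t ^ p := by nlinarith
  · -- big case
    have habs1 : ‖1 + z‖ ≤ 1 + t := by
      calc ‖1 + z‖ ≤ ‖(1:ℂ)‖ + ‖z‖ := norm_add_le 1 z
        _ = 1 + t := by simp [ht]
    have hS : ‖∑ m ∈ Finset.Icc 1 k, ((-1:ℂ)^m/m) * z^m‖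
        ≤ ∑ m ∈ Finset.Icc 1 k, t ^ m := by
      refine (norm_sum_le _ _).trans (Finset.sum_le_sum fun m hm => ?_)
      have hm1 : 1 ≤ m := (Finset.mem_Icc.mp hm).1
      rw [norm_mul, norm_div, norm_pow, norm_pow, norm_neg, norm_one, one_pow,
        Complex.norm_natCast]
      rw [← ht]
      have hm1' : (1:ℝ) ≤ m := by exact_mod_cast hm1
      have hdiv : 1/(m:ℝ) ≤ 1 := by rw [div_le_one (by linarith)]; linarith
      calc 1 / (m:ℝ) * t ^ m ≤ 1 * t ^ m :=
            mul_le_mul_of_nonneg_right hdiv (pow_nonneg ht0.le m)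
        _ = t ^ m := one_mul _
    have hmain : ‖(1 + z) *
        Complex.exp (∑ m ∈ Finset.Icc 1 k, ((-1:ℂ)^m/m) * z^m)‖
        ≤ Real.exp (Real.log (1 + t) + ∑ m ∈ Finset.Icc 1 k, t ^ m) := by
      rw [norm_mul, Real.exp_add, Real.exp_log (by linarith)]
      exact mul_le_mul habs1 ((hexpre _).trans (Real.exp_le_exp.mpr hS))
        (norm_nonneg _) (by linarith)
    refine hmain.trans (Real.exp_le_exp.mpr ?_)
    have htp : 0 ≤ t ^ p := Real.rpow_nonneg ht0.le p
    rcases le_or_gt t 1 with hle1 | hgt1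
    · -- 1/2 < t ≤ 1
      have hlog : Real.log (1 + t) ≤ 1 := by
        calc Real.log (1 + t) ≤ (1 + t) - 1 := Real.log_le_sub_one_of_pos (by linarith)
          _ ≤ 1 := by linarith
      have hsumle : ∑ m ∈ Finset.Icc 1 k, t ^ m ≤ (k:ℝ) := by
        calc ∑ m ∈ Finset.Icc 1 k, t ^ m ≤ ∑ m ∈ Finset.Icc 1 k, (1:ℝ) :=
              Finset.sum_le_sum fun m _ => pow_le_one₀ ht0.le hle1
          _ = (k:ℝ) := by simp [Nat.card_Icc]
      have hlow : ((2:ℝ) ^ (k+1))⁻¹ ≤ t ^ p := by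
        have h1 : ((1:ℝ)/2) ^ p ≤ t ^ p := Real.rpow_le_rpow (by norm_num) (by linarith) hp0.le
        have h2 : ((1:ℝ)/2) ^ ((k+1:ℕ):ℝ) ≤ ((1:ℝ)/2) ^ p :=
          Real.rpow_le_rpow_of_exponent_ge (by norm_num) (by norm_num) (by exact_mod_cast hp2)
        rw [Real.rpow_natCast] at h2
        calc ((2:ℝ) ^ (k+1))⁻¹ = ((1:ℝ)/2) ^ (k+1) := by
              rw [div_pow, one_pow, one_div]
          _ ≤ t ^ p := h2.trans h1
      have : (1 : ℝ) + k ≤ Γ * (2 ^ (k+1))⁻¹ := by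
        rw [hΓdef]
        have h2pos : (0:ℝ) < 2 ^ (k+1) := by positivity
        rw [add_mul, mul_inv_cancel_right₀ h2pos.ne']
        have := inv_nonneg.mpr h2pos.le
        linarith
      calc Real.log (1 + t) + ∑ m ∈ Finset.Icc 1 k, t ^ m ≤ 1 + (k:ℝ) := by linarith
        _ ≤ Γ * (2 ^ (k+1))⁻¹ := this
        _ ≤ Γ * t ^ p := by
            have hΓ0 : (0:ℝ) ≤ Γ := by linarith
            exact mul_le_mul_of_nonneg_left hlow hΓ0
    · -- t > 1
      have h1tp : (1:ℝ) ≤ t ^ p := by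
        have := Real.rpow_le_rpow zero_le_one hgt1.le hp0.le
        rwa [Real.one_rpow] at this
      have hlogt : Real.log t ≤ t ^ p / p := by
        have h1 : Real.log (t ^ p) = p * Real.log t := Real.log_rpow ht0 p
        have h2 : Real.log (t ^ p) ≤ t ^ p := Real.log_le_self (Real.rpow_nonneg ht0.le p)
        rw [h1] at h2
        rw [div_eq_inv_mul, ← inv_mul_cancel_left₀ hp0.ne' (Real.log t)]
        exact mul_le_mul_of_nonneg_left h2 (by positivity)
      have hlog : Real.log (1 + t) ≤ t ^ p + t ^ p / p := by
        calc Real.log (1 + t) ≤ Real.log (2 * t) :=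
              Real.log_le_log (by linarith) (by linarith)
          _ = Real.log 2 + Real.log t := Real.log_mul (by norm_num) ht0.ne'
          _ ≤ 1 + Real.log t := by
              have : Real.log 2 ≤ 1 := by
                calc Real.log 2 ≤ 2 - 1 := Real.log_le_sub_one_of_pos (by norm_num)
                  _ = 1 := by norm_num
              linarith
          _ ≤ t ^ p + t ^ p / p := by linarith
      have hsumle : ∑ m ∈ Finset.Icc 1 k, t ^ m ≤ (k:ℝ) * t ^ p := by
        have hkp : t ^ k ≤ t ^ p := by
          rw [← Real.rpow_natCast t k]
          exact Real.rpow_le_rpow_of_exponent_le hgt1.le (by push_cast at hp1 ⊢; linarith)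
        calc ∑ m ∈ Finset.Icc 1 k, t ^ m ≤ ∑ m ∈ Finset.Icc 1 k, t ^ p := by
              refine Finset.sum_le_sum fun m hm => ?_
              calc t ^ m ≤ t ^ k := pow_le_pow_right₀ hgt1.le (Finset.mem_Icc.mp hm).2
                _ ≤ t ^ p := hkp
          _ = (k:ℝ) * t ^ p := by rw [Finset.sum_const, Nat.card_Icc]; push_cast; ring
      have hΓge : (1:ℝ) + 1/p + 1 + k ≤ Γ := by
        rw [hΓdef]
        nlinarith [hpinv.le, (Nat.cast_nonneg k : (0:ℝ) ≤ k)]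
      calc Real.log (1 + t) + ∑ m ∈ Finset.Icc 1 k, t ^ m
          ≤ (t ^ p + t ^ p / p) + (k:ℝ) * t ^ p := by linarith
        _ = (1 + 1/p + k) * t ^ p := by ring
        _ ≤ Γ * t ^ p := by nlinarith [h1tp]
end

section
/- For every z ∈ ℂ, |(1 + z) e^{−z}| ≤ e^{|z|²/2}. -/
/-- The scalar inequality `|(1+z) e^{-z}| ≤ e^{|z|²/2}` underlying the value
`Γ_{2,2} = 1/2` for second-order regularized determinants. -/
theorem abs_one_add_mul_exp_neg_le (z : ℂ) :
    ‖(1 + z) * Complex.exp (-z)‖ ≤ Real.exp (‖z‖ ^ 2 / 2) := by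
  rw [norm_mul, Complex.norm_exp]
  have hsq : ‖1 + z‖ ^ 2 = 1 + (2 * z.re + ‖z‖ ^ 2) := by
    rw [Complex.sq_norm, Complex.sq_norm, Complex.normSq_apply, Complex.normSq_apply]
    simp
    ring
  have h1 : ‖1 + z‖ ^ 2 ≤ Real.exp (2 * z.re + ‖z‖ ^ 2) := by
    rw [hsq]
    linarith [Real.add_one_le_exp (2 * z.re + ‖z‖ ^ 2)]
  have h2 : ‖1 + z‖ ≤ Real.exp (z.re + ‖z‖ ^ 2 / 2) := by
    have hb : (0:ℝ) ≤ Real.exp (z.re + ‖z‖ ^ 2 / 2) := Real.exp_nonneg _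
    have hE : Real.exp (z.re + ‖z‖ ^ 2 / 2) ^ 2
        = Real.exp (2 * z.re + ‖z‖ ^ 2) := by
      rw [sq, ← Real.exp_add]; ring_nf
    nlinarith [norm_nonneg (1 + z)]
  calc ‖1 + z‖ * Real.exp (-z).re
      ≤ Real.exp (z.re + ‖z‖ ^ 2 / 2) * Real.exp (-z.re) := by
        apply mul_le_mul_of_nonneg_right h2 (Real.exp_nonneg _) |>.trans_eq
        simp
    _ = Real.exp (‖z‖ ^ 2 / 2) := by
        rw [← Real.exp_add]; ring_nf
end
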